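/- Let Y be a finite nonempty type and let π : ℝ → (Y → ℝ) be a family of probability mass functions on Y (so π(θ)(y) ≥ 0 and Σ_y π(θ)(y) = 1 for all θ), such that for each y the map θ ↦ π(θ)(y) is differentiable and π(θ)(y) > 0 for all θ, y. Let π_ref be a probability mass function on Y with π_ref(y) > 0 for all y. Then for every θ₀ ∈ ℝ, (1/2)·Σ_y π(θ₀)(y)·(d/dθ)|_{θ=θ₀} (log(π(θ)(y)/π_ref(y)))² = (d/dθ)|_{θ=θ₀} Σ_y π(θ)(y)·log(π(θ)(y)/π_ref(y)); that is, under on-policy sampling the expected gradient of the ℓ2-regularisation loss (1/2)·(log(π_θ(y)/π_ref(y)))² equals the gradient of the KL divergence KL(π_θ‖π_ref). -/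

import Mathlib

theorem dro_stmt_16 {Y : Type*} [Fintype Y] [Nonempty Y]
    (π : ℝ → Y → ℝ) (hπ0 : ∀ θ y, 0 < π θ y) (hπ1 : ∀ θ, ∑ y, π θ y = 1)
    (hdiff : ∀ y, Differentiable ℝ (fun θ => π θ y))
    (πref : Y → ℝ) (hrefpos : ∀ y, 0 < πref y) (href1 : ∑ y, πref y = 1) :
    ∀ θ₀ : ℝ,
      (1 / 2) * ∑ y, π θ₀ y *
          deriv (fun θ => (Real.log (π θ y / πref y)) ^ 2) θ₀ =
        deriv (fun θ => ∑ y, π θ y * Real.log (π θ y / πref y)) θ₀ := by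
  intro θ₀
  set d : Y → ℝ := fun y => deriv (fun θ => π θ y) θ₀ with hd_def
  have hd : ∀ y, HasDerivAt (fun θ => π θ y) (d y) θ₀ := fun y =>
    (hdiff y θ₀).hasDerivAt
  -- log ratio has derivative d y / π θ₀ y
  have hlog : ∀ y, HasDerivAt (fun θ => Real.log (π θ y / πref y))
      (d y / π θ₀ y) θ₀ := by
    intro y
    have h1 : HasDerivAt (fun θ => Real.log (π θ y) - Real.log (πref y))
        (d y / π θ₀ y) θ₀ := by
      have := (hd y).log (ne_of_gt (hπ0 θ₀ y))
      simpa using this.sub_const (Real.log (πref y))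
    refine h1.congr_of_eventuallyEq ?_
    filter_upwards with θ
    rw [Real.log_div (ne_of_gt (hπ0 θ y)) (ne_of_gt (hrefpos y))]
  -- squared log ratio
  have hsq : ∀ y, HasDerivAt (fun θ => (Real.log (π θ y / πref y)) ^ 2)
      (2 * Real.log (π θ₀ y / πref y) * (d y / π θ₀ y)) θ₀ := by
    intro y
    simpa [pow_one, mul_comm, mul_assoc, mul_left_comm] using (hlog y).fun_pow 2
  -- each summand of the RHS
  have hterm : ∀ y, HasDerivAt (fun θ => π θ y * Real.log (π θ y / πref y))
      (d y * Real.log (π θ₀ y / πref y) + d y) θ₀ := by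
    intro y
    have := (hd y).fun_mul (hlog y)
    have hππ : π θ₀ y * (d y / π θ₀ y) = d y := by
      rw [mul_div_assoc']
      exact mul_div_cancel_left₀ _ (ne_of_gt (hπ0 θ₀ y))
    simpa [hππ] using this
  have hsum : HasDerivAt (fun θ => ∑ y, π θ y * Real.log (π θ y / πref y))
      (∑ y, (d y * Real.log (π θ₀ y / πref y) + d y)) θ₀ :=
    HasDerivAt.fun_sum (fun y _ => hterm y)
  -- sum of derivatives of π is zero
  have hdsum : (∑ y, d y) = 0 := by
    have h1 : HasDerivAt (fun θ => ∑ y, π θ y) (∑ y, d y) θ₀ :=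
      HasDerivAt.fun_sum (fun y _ => hd y)
    have h2 : (fun θ : ℝ => ∑ y, π θ y) = fun _ => (1 : ℝ) := by
      funext θ; exact hπ1 θ
    rw [h2] at h1
    have := h1.deriv
    simpa using this.symm
  rw [hsum.deriv]
  have hL : ∀ y, deriv (fun θ => (Real.log (π θ y / πref y)) ^ 2) θ₀ =
      2 * Real.log (π θ₀ y / πref y) * (d y / π θ₀ y) := fun y => (hsq y).deriv
  simp only [hL]
  rw [Finset.sum_add_distrib, hdsum, add_zero, Finset.mul_sum]
  apply Finset.sum_congr rfl
  intro y _
  have hne : π θ₀ y ≠ 0 := ne_of_gt (hπ0 θ₀ y)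
  field_simp
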